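/- arXiv:1802.05542 — 5 statements merged into one kernel-verified Lean document; each statement's English description precedes it below -/
import Mathlib

section
/- For every positive natural number n, the 2-adic valuation of the Pell number P_n equals the 2-adic valuation of n, and the associated Pell number Q_n is odd. -/
def pellP : ℕ → ℕ
  | 0 => 0
  | 1 => 1
  | n + 2 => 2 * pellP (n + 1) + pellP n

def pellQ : ℕ → ℕ
  | 0 => 1
  | 1 => 1
  | n + 2 => 2 * pellQ (n + 1) + pellQ n

lemma pellQ_odd : ∀ n, Odd (pellQ n)
  | 0 => ⟨0, rfl⟩
  | 1 => ⟨0, rfl⟩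
  | n + 2 => by
    obtain ⟨k, hk⟩ := pellQ_odd n
    exact ⟨pellQ (n + 1) + k, by simp [pellQ, hk]; ring⟩

lemma pellQ_eq : ∀ n, pellQ (n + 1) = pellP (n + 1) + pellP n
  | 0 => rfl
  | 1 => rfl
  | n + 2 => by
    have h1 := pellQ_eq (n + 1)
    have h2 := pellQ_eq n
    show 2 * pellQ (n + 2) + pellQ (n + 1) =
      (2 * pellP (n + 2) + pellP (n + 1)) + (2 * pellP (n + 1) + pellP n)
    rw [h1, h2]; ring

lemma pellP_add : ∀ m n, pellP (m + n + 1) = pellP (m + 1) * pellP (n + 1) + pellP m * pellP n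
  | 0, n => by simp [pellP]
  | 1, n => by
    have : 1 + n + 1 = n + 2 := by ring
    rw [this]
    show 2 * pellP (n + 1) + pellP n = _
    simp [pellP]
  | m + 2, n => by
    have h1 := pellP_add (m + 1) n
    have h2 := pellP_add m n
    have e1 : m + 2 + n + 1 = (m + n + 1) + 2 := by ring
    rw [e1]
    show 2 * pellP (m + n + 1 + 1) + pellP (m + n + 1) = _
    have e2 : m + n + 1 + 1 = (m + 1) + n + 1 := by ring
    rw [e2, h1, h2]
    show _ = (2 * pellP (m + 2) + pellP (m + 1)) * pellP (n + 1) +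
      (2 * pellP (m + 1) + pellP m) * pellP n
    ring

lemma pellP_double (n : ℕ) : pellP (2 * (n + 1)) = 2 * pellP (n + 1) * pellQ (n + 1) := by
  have h := pellP_add (n + 1) n
  have e : 2 * (n + 1) = (n + 1) + n + 1 := by ring
  rw [e, h, pellQ_eq]
  show (2 * pellP (n + 1) + pellP n) * pellP (n + 1) + pellP (n + 1) * pellP n = _
  ring

lemma pellP_mod : ∀ n, pellP n % 2 = n % 2
  | 0 => rfl
  | 1 => rfl
  | n + 2 => by
    have h := pellP_mod n
    show (2 * pellP (n + 1) + pellP n) % 2 = (n + 2) % 2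
    omega

lemma pellP_pos : ∀ n, 0 < n → 0 < pellP n
  | 1, _ => Nat.one_pos
  | n + 2, _ => by
    have h := pellP_pos (n + 1) (Nat.succ_pos n)
    show 0 < 2 * pellP (n + 1) + pellP n
    omega

theorem pell_two_adic (n : ℕ) (hn : 0 < n) :
    (pellP n).factorization 2 = n.factorization 2 ∧ Odd (pellQ n) := by
  refine ⟨?_, pellQ_odd n⟩
  induction n using Nat.strong_induction_on with
  | _ n ih =>
    rcases Nat.even_or_odd n with he | ho
    · obtain ⟨m, hm⟩ := he
      have hm' : n = 2 * m := by omega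
      have hmpos : 0 < m := by omega
      obtain ⟨k, rfl⟩ : ∃ k, m = k + 1 := ⟨m - 1, by omega⟩
      subst hm'
      rw [pellP_double]
      have hQodd := pellQ_odd (k + 1)
      have hQ2 : ¬ (2 ∣ pellQ (k + 1)) :=
        Nat.two_dvd_ne_zero.mpr (Nat.odd_iff.mp hQodd)
      have hPpos : 0 < pellP (k + 1) := pellP_pos (k + 1) (Nat.succ_pos k)
      have hQpos : 0 < pellQ (k + 1) := hQodd.pos
      rw [Nat.factorization_mul (by positivity) hQpos.ne',
          Nat.factorization_mul (by norm_num) hPpos.ne',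
          Nat.factorization_mul (by norm_num) (Nat.succ_pos k).ne']
      have ihk := ih (k + 1) (by omega) (Nat.succ_pos k)
      simp [Nat.factorization_eq_zero_of_not_dvd hQ2, ihk, Nat.Prime.factorization_self Nat.prime_two]
    · have hodd : Odd (pellP n) := by
        rw [Nat.odd_iff] at ho ⊢
        rw [pellP_mod]; exact ho
      rw [Nat.factorization_eq_zero_of_not_dvd (Nat.two_dvd_ne_zero.mpr (Nat.odd_iff.mp hodd)),
          Nat.factorization_eq_zero_of_not_dvd (Nat.two_dvd_ne_zero.mpr (Nat.odd_iff.mp ho))]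
end

section
/- For a natural number n, 3 divides the associated Pell number Q_n if and only if n ≡ 2 (mod 4). -/
lemma pellQ_add_eight (n : ℕ) : pellQ (n + 8) % 3 = pellQ n % 3 := by
  have h : pellQ (n + 8) = 408 * pellQ (n + 1) + 169 * pellQ n := by
    show pellQ (n + 6 + 2) = _
    simp only [pellQ]
    ring
  omega

theorem three_dvd_pellQ_iff (n : ℕ) : 3 ∣ pellQ n ↔ n % 4 = 2 := by
  induction n using Nat.strong_induction_on with
  | _ n ih =>
    rcases lt_or_ge n 8 with h | h
    · interval_cases n <;> decide
    · obtain ⟨m, rfl⟩ : ∃ m, n = m + 8 := ⟨n - 8, by omega⟩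
      have := pellQ_add_eight m
      have hm := ih m (by omega)
      rw [Nat.dvd_iff_mod_eq_zero] at hm ⊢
      omega
end

section
/- For every natural number n, 5 does not divide the associated Pell number Q_n. -/
lemma pellQ_shift12 (n : ℕ) : pellQ (n + 12) % 5 = pellQ n % 5 := by
  have h : pellQ (n + 12) = 13860 * pellQ (n + 1) + 5741 * pellQ n := by
    simp only [show n + 12 = n + 10 + 2 from rfl, pellQ]
    ring
  omega

theorem five_not_dvd_pellQ (n : ℕ) : ¬ (5 ∣ pellQ n) := by
  rw [Nat.dvd_iff_mod_eq_zero]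
  induction n using Nat.strong_induction_on with
  | _ n ih =>
    rcases lt_or_ge n 12 with h | h
    · interval_cases n <;> decide
    · obtain ⟨m, rfl⟩ := Nat.exists_eq_add_of_le h
      rw [add_comm, pellQ_shift12]
      exact ih m (by omega)
end

section
/- If p is an odd prime, m and n are positive integers, and the Pell number P_n equals 4·p^m, then n = 4, p = 3, and m = 1. -/
lemma pell_step : ∀ n, pellP (n + 1) = pellP n + pellQ n ∧
    pellQ (n + 1) = 2 * pellP n + pellQ n := by
  intro n
  induction n with
  | zero => simp [pellP, pellQ]
  | succ k ih =>
    have hP : pellP (k + 1 + 1) = 2 * pellP (k + 1) + pellP k := rfl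
    have hQ : pellQ (k + 1 + 1) = 2 * pellQ (k + 1) + pellQ k := rfl
    omega

lemma pell_add (a b : ℕ) : pellP (a + b) = pellP a * pellQ b + pellQ a * pellP b ∧
    pellQ (a + b) = pellQ a * pellQ b + 2 * pellP a * pellP b := by
  induction b with
  | zero => simp [pellP, pellQ]
  | succ k ih =>
    have h1 := pell_step (a + k)
    have h2 := pell_step k
    constructor
    · have : pellP (a + (k+1)) = pellP (a + k) + pellQ (a + k) := by
        rw [← add_assoc]; exact h1.1
      rw [this, ih.1, ih.2, h2.1, h2.2]; ring
    · have : pellQ (a + (k+1)) = 2 * pellP (a + k) + pellQ (a + k) := by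
        rw [← add_assoc]; exact h1.2
      rw [this, ih.1, ih.2, h2.1, h2.2]; ring

lemma pell_parity : ∀ n, pellP n % 2 = n % 2 ∧ pellQ n % 2 = 1 := by
  intro n
  induction n with
  | zero => simp [pellP, pellQ]
  | succ k ih =>
    have h := pell_step k
    omega

lemma pell_alt : ∀ n, pellQ n ^ 2 = 2 * pellP n ^ 2 + 1 ∨
    pellQ n ^ 2 + 1 = 2 * pellP n ^ 2 := by
  intro n
  induction n with
  | zero => left; simp [pellP, pellQ]
  | succ k ih =>
    have h := pell_step k
    rcases ih with h1 | h1
    · right; rw [h.1, h.2]; nlinarith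
    · left; rw [h.1, h.2]; nlinarith

lemma pell_coprime {d j : ℕ} (hP : d ∣ pellP j) (hQ : d ∣ pellQ j) : d ∣ 1 := by
  have h1 : d ∣ pellQ j ^ 2 := Dvd.dvd.pow hQ (by norm_num)
  have h2 : d ∣ 2 * pellP j ^ 2 := Dvd.dvd.mul_left (Dvd.dvd.pow hP (by norm_num)) 2
  rcases pell_alt j with h | h
  · have := Nat.dvd_sub h1 h2
    rwa [show pellQ j ^ 2 - 2 * pellP j ^ 2 = 1 by omega] at this
  · have := Nat.dvd_sub h2 h1
    rwa [show 2 * pellP j ^ 2 - pellQ j ^ 2 = 1 by omega] at this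

lemma pellP_ge : ∀ n, n ≤ pellP n := by
  intro n
  induction n using Nat.strong_induction_on with
  | _ n ih =>
    match n with
    | 0 => simp [pellP]
    | 1 => simp [pellP]
    | k + 2 =>
      have h1 := ih (k + 1) (by omega)
      have : pellP (k + 2) = 2 * pellP (k + 1) + pellP k := rfl
      omega

lemma pellQ_ge (n : ℕ) : 2 ≤ n → 2 ≤ pellQ n := by
  intro hn
  match n, hn with
  | k + 2, _ =>
    have h1 := (pell_parity (k+1)).2
    have : pellQ (k + 2) = 2 * pellQ (k + 1) + pellQ k := rfl
    omega

theorem pellP_eq_four_prime_pow (p m n : ℕ) (hp : p.Prime) (hodd : Odd p)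
    (hm : 0 < m) (hn : 0 < n) (h : pellP n = 4 * p ^ m) :
    n = 4 ∧ p = 3 ∧ m = 1 := by
  -- p^m is odd
  have hpodd : p % 2 = 1 := Nat.odd_iff.mp hodd
  have hpm_odd : p ^ m % 2 = 1 := by
    rw [Nat.pow_mod, hpodd, Nat.one_pow]
  -- n is even
  have hpar := pell_parity n
  have hne : n % 2 = 0 := by omega
  obtain ⟨k, hk⟩ : ∃ k, n = 2 * k := ⟨n / 2, by omega⟩
  have hk0 : 0 < k := by omega
  -- P_{2k} = 2 P_k Q_k
  have hdbl := pell_add k k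
  rw [show k + k = 2 * k from by ring] at hdbl
  have hPk : pellP k * pellQ k = 2 * p ^ m := by
    have h2 : 2 * (pellP k * pellQ k) = 4 * p ^ m := by
      rw [← h, hk, hdbl.1]; ring
    omega
  -- P_k even, so k even
  have hQkodd := (pell_parity k).2
  have hPkpar := (pell_parity k).1
  have hPkeven : pellP k % 2 = 0 := by
    have : (pellP k * pellQ k) % 2 = 0 := by omega
    rw [Nat.mul_mod, hQkodd] at this
    omega
  obtain ⟨j, hj⟩ : ∃ j, k = 2 * j := ⟨k / 2, by omega⟩
  have hj0 : 0 < j := by omega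
  have hdbl2 := pell_add j j
  rw [show j + j = 2 * j from by ring] at hdbl2
  -- P_j Q_j Q_{2j} = p^m
  have hkey : pellP j * pellQ j * pellQ (2 * j) = p ^ m := by
    have h2 : 2 * (pellP j * pellQ j * pellQ (2 * j)) = 2 * p ^ m := by
      rw [← hPk, hj, hdbl2.1]; ring
    omega
  -- j is odd
  have hPjpar := (pell_parity j).1
  have hjodd : j % 2 = 1 := by
    have hprod : (pellP j * pellQ j * pellQ (2 * j)) % 2 = 1 := by
      rw [hkey]; exact hpm_odd
    rw [Nat.mul_mod, Nat.mul_mod (pellP j)] at hprod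
    rcases Nat.mod_two_eq_zero_or_one (pellP j) with h0 | h1
    · rw [h0] at hprod; simp at hprod
    · omega
  rcases Nat.lt_or_ge j 2 with hj1 | hj2
  · -- j = 1, n = 4
    have hj1' : j = 1 := by omega
    subst hj1'
    have hQ2 : pellQ 2 = 3 := rfl
    have hP1 : pellP 1 = 1 := rfl
    have hQ1 : pellQ 1 = 1 := rfl
    rw [hP1, hQ1, hQ2] at hkey
    simp at hkey
    -- 3 = p ^ m
    have h3 : p ^ m = 3 := hkey.symm
    have hpdvd : p ∣ 3 := by
      rw [← h3]
      exact dvd_pow_self p (by omega)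
    have hp3 : p = 3 := by
      rcases (Nat.Prime.eq_one_or_self_of_dvd (by norm_num) p hpdvd) with h' | h'
      · exact absurd h' hp.one_lt.ne'
      · exact h'
    subst hp3
    have hm1 : m = 1 := by
      by_contra hm1
      have : 2 ≤ m := by omega
      have : 3 ^ 2 ≤ 3 ^ m := Nat.pow_le_pow_right (by norm_num) this
      omega
    exact ⟨by omega, rfl, hm1⟩
  · -- j ≥ 2: contradiction via coprimality
    exfalso
    have hPj2 : 2 ≤ pellP j := le_trans hj2 (pellP_ge j)
    have hQj2 : 2 ≤ pellQ j := pellQ_ge j hj2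
    have hPdvd : pellP j ∣ p ^ m := ⟨pellQ j * pellQ (2 * j), by rw [← hkey]; ring⟩
    have hQdvd : pellQ j ∣ p ^ m := ⟨pellP j * pellQ (2 * j), by rw [← hkey]; ring⟩
    obtain ⟨i, hi, hieq⟩ := (Nat.dvd_prime_pow hp).mp hPdvd
    obtain ⟨i', hi', hieq'⟩ := (Nat.dvd_prime_pow hp).mp hQdvd
    have hi0 : 0 < i := by
      rcases Nat.eq_zero_or_pos i with h0 | h0
      · rw [h0, pow_zero] at hieq; omega
      · exact h0
    have hi'0 : 0 < i' := by
      rcases Nat.eq_zero_or_pos i' with h0 | h0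
      · rw [h0, pow_zero] at hieq'; omega
      · exact h0
    have hpP : p ∣ pellP j := by rw [hieq]; exact dvd_pow_self p hi0.ne'
    have hpQ : p ∣ pellQ j := by rw [hieq']; exact dvd_pow_self p hi'0.ne'
    have := pell_coprime hpP hpQ
    have := Nat.le_of_dvd one_pos this
    have := hp.two_le
    omega
end

section
/- There is no natural number n > 16 such that φ(Q_n) = 2·(10^m − 1)/9 for some m ≥ 2, where Q_n is the n-th associated Pell number. -/
lemma pellQ_rec (n : ℕ) : pellQ (n+2) = 2 * pellQ (n+1) + pellQ n := rfl
lemma pellP_rec (n : ℕ) : pellP (n+2) = 2 * pellP (n+1) + pellP n := rfl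

lemma step_aux : ∀ n, pellQ (n+1) = pellQ n + 2 * pellP n ∧ pellP (n+1) = pellP n + pellQ n := by
  intro n
  induction n with
  | zero => simp [pellQ, pellP]
  | succ k ih =>
    obtain ⟨h1, h2⟩ := ih
    refine ⟨?_, ?_⟩
    · rw [pellQ_rec]
      omega
    · rw [pellP_rec]
      omega

lemma pellQ_succ (n : ℕ) : pellQ (n+1) = pellQ n + 2 * pellP n := (step_aux n).1
lemma pellP_succ (n : ℕ) : pellP (n+1) = pellP n + pellQ n := (step_aux n).2

lemma pellQ_pos (n : ℕ) : 1 ≤ pellQ n := by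
  induction n with
  | zero => simp [pellQ]
  | succ k ih => rw [pellQ_succ]; omega

lemma pell_sq : ∀ n, (n % 2 = 0 → (pellQ n)^2 = 2*(pellP n)^2 + 1) ∧
    (n % 2 = 1 → (pellQ n)^2 + 1 = 2*(pellP n)^2) := by
  intro n
  induction n with
  | zero => simp [pellQ, pellP]
  | succ k ih =>
    obtain ⟨h0, h1⟩ := ih
    rw [pellQ_succ, pellP_succ]
    rcases Nat.even_or_odd k with hk | hk
    · have hk' : k % 2 = 0 := Nat.even_iff.mp hk
      have := h0 hk'
      constructor
      · intro h; omega
      · intro _; nlinarith [this]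
    · have hk' : k % 2 = 1 := Nat.odd_iff.mp hk
      have := h1 hk'
      constructor
      · intro _; nlinarith [this]
      · intro h; omega

lemma pellQ_add : ∀ s t, pellQ (s + t) = pellQ s * pellQ t + 2 * pellP s * pellP t := by
  have key : ∀ s, (∀ t, pellQ (s + t) = pellQ s * pellQ t + 2 * pellP s * pellP t) ∧
      (∀ t, pellQ (s + 1 + t) = pellQ (s+1) * pellQ t + 2 * pellP (s+1) * pellP t) := by
    intro s
    induction s with
    | zero =>
      constructor
      · intro t; simp [pellQ, pellP]
      · intro t
        have : 0 + 1 + t = t + 1 := by omega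
        rw [this, pellQ_succ t, pellQ_succ 0]
        simp [pellQ, pellP]
    | succ k ih =>
      obtain ⟨ih0, ih1⟩ := ih
      refine ⟨ih1, ?_⟩
      intro t
      have e1 : k + 1 + 1 + t = (k + t) + 2 := by omega
      rw [e1, pellQ_rec, pellQ_rec k, pellP_rec k]
      have a0 := ih0 t
      have a1 := ih1 t
      have e2 : k + 1 + t = (k + t) + 1 := by omega
      rw [e2] at a1
      rw [a1, a0]
      ring
  intro s t
  exact (key s).1 t

lemma pellQ_double (t : ℕ) : pellQ (2 * t) = (pellQ t)^2 + 2 * (pellP t)^2 := by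
  have := pellQ_add t t
  have e : 2 * t = t + t := by omega
  rw [e, this]; ring

lemma pellQ_double_even (t : ℕ) (ht : t % 2 = 0) : pellQ (2 * t) + 1 = 2 * (pellQ t)^2 := by
  have h1 := pellQ_double t
  have h2 := (pell_sq t).1 ht
  omega

-- periodicity mod 40
lemma pellQ_mod40_period : ∀ n, pellQ (n + 12) % 40 = pellQ n % 40 ∧
    pellQ (n + 13) % 40 = pellQ (n+1) % 40 := by
  intro n
  induction n with
  | zero =>
    constructor <;> norm_num [pellQ]
  | succ k ih =>
    obtain ⟨h1, h2⟩ := ih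
    refine ⟨h2, ?_⟩
    have e1 : k + 1 + 13 = (k + 12) + 2 := by omega
    have e2 : k + 1 + 1 = k + 2 := by omega
    rw [e1, e2, pellQ_rec (k+12), pellQ_rec k]
    have e3 : k + 12 + 1 = k + 13 := by omega
    rw [e3]
    omega

lemma pellQ_mod40 : ∀ n, pellQ n % 40 = pellQ (n % 12) % 40 := by
  intro n
  induction n using Nat.strong_induction_on with
  | _ n ih =>
    by_cases h : n < 12
    · rw [Nat.mod_eq_of_lt h]
    · have hp := (pellQ_mod40_period (n-12)).1
      have e : n - 12 + 12 = n := by omega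
      rw [e] at hp
      have e12 : (n-12) % 12 = n % 12 := by omega
      rw [hp, ih (n-12) (by omega), e12]

lemma pellQ_mod40_mem (n : ℕ) : pellQ n % 40 = 1 ∨ pellQ n % 40 = 3 ∨ pellQ n % 40 = 7
    ∨ pellQ n % 40 = 17 ∨ pellQ n % 40 = 19 ∨ pellQ n % 40 = 33 ∨ pellQ n % 40 = 39 := by
  rw [pellQ_mod40]
  have h : n % 12 < 12 := Nat.mod_lt _ (by norm_num)
  interval_cases (n % 12) <;> norm_num [pellQ]

lemma pellQ_mod40_ne23 (n : ℕ) : pellQ n % 40 ≠ 23 := by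
  rcases pellQ_mod40_mem n with h|h|h|h|h|h|h <;> omega

lemma pellQ_mod8_odd (n : ℕ) (h : n % 2 = 1) : pellQ n % 8 = 1 ∨ pellQ n % 8 = 7 := by
  have key := pellQ_mod40 n
  have h8 : pellQ n % 8 = pellQ n % 40 % 8 := (Nat.mod_mod_of_dvd _ (by norm_num)).symm
  have h12 : n % 12 = 1 ∨ n % 12 = 3 ∨ n % 12 = 5 ∨ n % 12 = 7 ∨ n % 12 = 9 ∨ n % 12 = 11 := by
    omega
  rcases h12 with h'|h'|h'|h'|h'|h' <;> rw [h'] at key <;> norm_num [pellQ] at key <;> omega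

lemma pellQ_mod8_two (n : ℕ) (h : n % 4 = 2) : pellQ n % 8 = 3 := by
  have key := pellQ_mod40 n
  have h8 : pellQ n % 8 = pellQ n % 40 % 8 := (Nat.mod_mod_of_dvd _ (by norm_num)).symm
  have h12 : n % 12 = 2 ∨ n % 12 = 6 ∨ n % 12 = 10 := by omega
  rcases h12 with h'|h'|h' <;> rw [h'] at key <;> norm_num [pellQ] at key <;> omega

lemma pellQ_odd_s12 (n : ℕ) : pellQ n % 2 = 1 := by
  have key := pellQ_mod40 n
  have h2 : pellQ n % 2 = pellQ n % 40 % 2 := (Nat.mod_mod_of_dvd _ (by norm_num)).symm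
  have h12 : n % 12 < 12 := Nat.mod_lt _ (by norm_num)
  interval_cases h : (n % 12) <;> norm_num [pellQ] at key <;> omega

lemma totient_structure {N : ℕ} (hodd : N % 2 = 1) (hN : 2 < N) (h : N.totient % 4 = 2) :
    ∃ p a, Nat.Prime p ∧ p % 4 = 3 ∧ 0 < a ∧ N = p ^ a := by
  have hN0 : N ≠ 0 := by omega
  have hN1 : N ≠ 1 := by omega
  set p := N.minFac with hp_def
  have hp : p.Prime := Nat.minFac_prime hN1
  have hpdvd : p ∣ N := Nat.minFac_dvd N
  have hpodd : p % 2 = 1 := by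
    rcases Nat.Prime.eq_two_or_odd hp with h2 | h2
    · exfalso
      have : (2:ℕ) ∣ N := h2 ▸ hpdvd
      omega
    · exact h2
  have hp3 : 3 ≤ p := by
    have := hp.two_le
    omega
  set a := N.factorization p with ha_def
  have ha : 0 < a := by
    rw [ha_def]
    exact Nat.Prime.factorization_pos_of_dvd hp hN0 hpdvd
  set c := ordCompl[p] N with hc_def
  have hNeq : p ^ a * c = N := Nat.ordProj_mul_ordCompl_eq_self N p
  have hcop : Nat.Coprime (p ^ a) c :=
    Nat.Coprime.pow_left _ (Nat.coprime_ordCompl hp hN0)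
  have htot : N.totient = (p ^ a).totient * c.totient := by
    rw [← hNeq, Nat.totient_mul hcop]
  have hpa2 : 2 < p ^ a := by
    calc 2 < 3 := by norm_num
    _ ≤ p := hp3
    _ = p ^ 1 := (pow_one p).symm
    _ ≤ p ^ a := Nat.pow_le_pow_right (by omega) ha
  have hpaeven : (p ^ a).totient % 2 = 0 := Nat.even_iff.mp (Nat.totient_even hpa2)
  have hc1 : c = 1 := by
    by_contra hc
    have hcpos : 0 < c := Nat.ordCompl_pos p hN0
    have hcodd : c % 2 = 1 := by
      rcases Nat.even_or_odd c with he | he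
      · exfalso
        have h2 : (2:ℕ) ∣ N := dvd_trans he.two_dvd (Nat.ordCompl_dvd N p)
        omega
      · exact Nat.odd_iff.mp he
    have hc3 : 2 < c := by omega
    have hceven : c.totient % 2 = 0 := Nat.even_iff.mp (Nat.totient_even hc3)
    rw [htot] at h
    obtain ⟨u, hu⟩ := (Nat.even_iff.mpr hpaeven)
    obtain ⟨v, hv⟩ := (Nat.even_iff.mpr hceven)
    rw [hu, hv] at h
    have he : (u+u)*(v+v) = 4*(u*v) := by ring
    rw [he] at h
    omega
  rw [hc1, mul_one] at hNeq
  refine ⟨p, a, hp, ?_, ha, hNeq.symm⟩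
  -- p % 4 = 3
  by_contra hp4
  have hp41 : p % 4 = 1 := by omega
  have : N.totient = p ^ (a-1) * (p - 1) := by
    rw [← hNeq, Nat.totient_prime_pow hp ha]
  rw [this] at h
  have : (p - 1) % 4 = 0 := by omega
  obtain ⟨w, hw⟩ := Nat.dvd_of_mod_eq_zero this
  rw [hw] at h
  have he : p ^ (a-1) * (4*w) = 4*(p^(a-1)*w) := by ring
  rw [he] at h
  omega

lemma odd_sq_mod8 {p : ℕ} (hp : p % 2 = 1) : p ^ 2 % 8 = 1 := by
  have h : p ^ 2 % 8 = (p % 8) ^ 2 % 8 := by rw [Nat.pow_mod]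
  have h8 : p % 8 = 1 ∨ p % 8 = 3 ∨ p % 8 = 5 ∨ p % 8 = 7 := by omega
  rcases h8 with h'|h'|h'|h' <;> rw [h'] at h <;> norm_num at h <;> omega

lemma pow_even_mod8 {p : ℕ} (hp : p % 2 = 1) (k : ℕ) : p ^ (2 * k) % 8 = 1 := by
  rw [pow_mul, Nat.pow_mod, odd_sq_mod8 hp, one_pow, Nat.one_mod_eq_one.mpr (by norm_num)]

lemma nine_pow_mod40 (k : ℕ) : 9 ^ k % 40 = 1 ∨ 9 ^ k % 40 = 9 := by
  induction k with
  | zero => left; rfl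
  | succ j ih =>
    have h : (9:ℕ) ^ (j+1) % 40 = (9 ^ j % 40) * 9 % 40 := by
      rw [pow_succ, Nat.mul_mod]
    rcases ih with h'|h' <;> rw [h'] at h <;> omega

lemma odd_case_mod8 {p n : ℕ} (hp : p.Prime) (hdvd : p ∣ pellQ n) (hn : n % 2 = 1) :
    p % 8 = 1 ∨ p % 8 = 7 := by
  haveI := Fact.mk hp
  have hp2 : p ≠ 2 := by
    intro h
    subst h
    have h1 := pellQ_odd_s12 n
    omega
  have hid := (pell_sq n).2 hn
  have hQ0 : ((pellQ n : ℕ) : ZMod p) = 0 := (ZMod.natCast_eq_zero_iff _ _).mpr hdvd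
  have hsq : IsSquare (2 : ZMod p) := by
    refine ⟨2 * (pellP n : ZMod p), ?_⟩
    have hc : ((pellQ n : ZMod p)) ^ 2 + 1 = 2 * (pellP n : ZMod p) ^ 2 := by
      exact_mod_cast congrArg (Nat.cast (R := ZMod p)) hid
    rw [hQ0] at hc
    linear_combination 2 * hc
  exact (ZMod.exists_sq_eq_two_iff hp2).mp hsq

lemma mod4_zero_case {p n : ℕ} (hp : p.Prime) (hdvd : p ∣ pellQ n) (hn : n % 4 = 0)
    (hn0 : 0 < n) : p % 4 ≠ 3 := by
  haveI := Fact.mk hp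
  set t := n / 2 with ht_def
  have hnt : n = 2 * t := by omega
  have htev : t % 2 = 0 := by omega
  have hA := (pell_sq n).1 (by omega)
  have hB : pellQ n + 1 = 2 * (pellQ t) ^ 2 := by
    rw [hnt]
    exact pellQ_double_even t htev
  have hQ0 : ((pellQ n : ℕ) : ZMod p) = 0 := (ZMod.natCast_eq_zero_iff _ _).mpr hdvd
  have hcA : ((pellQ n : ZMod p)) ^ 2 = 2 * (pellP n : ZMod p) ^ 2 + 1 := by
    exact_mod_cast congrArg (Nat.cast (R := ZMod p)) hA
  have hcB : ((pellQ n : ZMod p)) + 1 = 2 * (pellQ t : ZMod p) ^ 2 := by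
    exact_mod_cast congrArg (Nat.cast (R := ZMod p)) hB
  rw [hQ0] at hcA hcB
  have hsq : IsSquare (-1 : ZMod p) := by
    refine ⟨2 * (pellP n : ZMod p) * (pellQ t : ZMod p), ?_⟩
    linear_combination (2 * (pellQ t : ZMod p)^2) * hcA - hcB
  exact (ZMod.exists_sq_eq_neg_one_iff).mp hsq

lemma pow10_mod360 : ∀ m, 2 ≤ m → (10:ℕ) ^ m % 360 = 100 ∨ (10:ℕ) ^ m % 360 = 280 := by
  intro m hm
  induction m with
  | zero => omega
  | succ j ih =>
    rcases Nat.lt_or_ge j 2 with hj | hj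
    · interval_cases j
      · omega
      · left; rfl
    · have h := ih hj
      have hs : (10:ℕ) ^ (j+1) % 360 = (10 ^ j % 360) * 10 % 360 := by
        rw [pow_succ, Nat.mul_mod]
      rcases h with h'|h' <;> rw [h'] at hs <;> omega

lemma pellQ_ge3 {n : ℕ} (hn : 2 ≤ n) : 3 ≤ pellQ n := by
  obtain ⟨k, rfl⟩ : ∃ k, n = k + 2 := ⟨n - 2, by omega⟩
  rw [pellQ_rec]
  have h1 := pellQ_pos (k+1)
  have h2 := pellQ_pos k
  omega

lemma mul3_mod (x y z M : ℕ) : x * y * z % M = (x % M) * (y % M) * (z % M) % M := by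
  rw [Nat.mul_mod, Nat.mul_mod x y, Nat.mod_mul_mod]


theorem no_repdigit_two_totient_pellQ :
    ¬ ∃ (n m : ℕ), 16 < n ∧ 2 ≤ m ∧ 9 * Nat.totient (pellQ n) = 2 * (10 ^ m - 1) := by
  rintro ⟨n, m, hn, hm, heq⟩
  set N := pellQ n with hN_def
  have hpow := pow10_mod360 m hm
  have hpow_ge : (100:ℕ) ≤ 10 ^ m := by
    calc (100:ℕ) = 10 ^ 2 := by norm_num
    _ ≤ 10 ^ m := Nat.pow_le_pow_right (by norm_num) hm
  have h22 : N.totient % 40 = 22 := by omega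
  have hodd : N % 2 = 1 := pellQ_odd_s12 n
  have hN3 : 2 < N := by
    have := pellQ_ge3 (n := n) (by omega)
    omega
  obtain ⟨p, a, hp, hp4, ha, hNpa⟩ := totient_structure hodd hN3 (by omega)
  have hdvd : p ∣ pellQ n := by
    rw [← hN_def, hNpa]
    exact dvd_pow_self p (by omega)
  have hpodd : p % 2 = 1 := by
    rcases hp.eq_two_or_odd with h2 | h2
    · exfalso
      rw [h2] at hdvd
      have := pellQ_odd_s12 n
      omega
    · exact h2
  have htot : N.totient = p ^ (a - 1) * (p - 1) := by
    rw [hNpa, Nat.totient_prime_pow hp ha]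
  have hQpa : pellQ n % 40 = p ^ a % 40 := by rw [← hN_def, hNpa]
  rcases Nat.even_or_odd n with hev | hodd_n
  · -- n even
    have hev' : n % 2 = 0 := Nat.even_iff.mp hev
    rcases Nat.lt_or_ge (n % 4) 2 with h4 | h4
    · -- n % 4 = 0
      have h40 : n % 4 = 0 := by omega
      exact mod4_zero_case hp hdvd h40 (by omega) hp4
    · -- n % 4 = 2
      have h42 : n % 4 = 2 := by omega
      have hQ8 : pellQ n % 8 = 3 := pellQ_mod8_two n h42
      have hpa8 : p ^ a % 8 = 3 := by
        rw [← hNpa]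
        exact hQ8
      rcases Nat.even_or_odd a with hae | hao
      · obtain ⟨k, hk⟩ := hae
        have hk' : a = 2 * k := by omega
        have : p ^ a % 8 = 1 := by
          rw [hk']
          exact pow_even_mod8 hpodd k
        omega
      · obtain ⟨k, hk⟩ := hao
        have hpk : p ^ (2 * k) % 8 = 1 := pow_even_mod8 hpodd k
        have hps : p ^ a % 8 = p % 8 % 8 := by
          rw [hk, pow_succ, Nat.mul_mod, hpk, one_mul]
        have hp8 : p % 8 = 3 := by omega
        have hphi8 : N.totient % 8 = (p ^ (2*k) % 8) * ((p-1) % 8) % 8 := by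
          rw [htot, hk]
          have e : 2 * k + 1 - 1 = 2 * k := by omega
          rw [e, Nat.mul_mod]
        rw [hpk] at hphi8
        have h6 : (p - 1) % 8 = 2 := by omega
        rw [h6] at hphi8
        omega
  · -- n odd
    have hno : n % 2 = 1 := Nat.odd_iff.mp hodd_n
    have hp8 : p % 8 = 7 := by
      rcases odd_case_mod8 hp hdvd hno with h | h <;> omega
    rcases Nat.even_or_odd a with hae | hao
    · -- a even : φ % 8 = 7*6 % 8 = 2 ≠ 6
      obtain ⟨k, hk⟩ := hae
      have hk' : a = 2 * k := by omega
      have hk1 : 1 ≤ k := by omega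
      have ha1 : a - 1 = 2 * (k - 1) + 1 := by omega
      have hphi : N.totient = p ^ (2*(k-1)) * p * (p-1) := by
        rw [htot, ha1, pow_succ]
      have hphi8 : N.totient % 8 = (p ^ (2*(k-1)) % 8) * (p % 8) * ((p-1) % 8) % 8 := by
        rw [hphi, mul3_mod]
      rw [pow_even_mod8 hpodd (k-1), hp8] at hphi8
      have h6 : (p - 1) % 8 = 6 := by omega
      rw [h6] at hphi8
      omega
    · -- a odd : mod 40 analysis
      obtain ⟨k, hk⟩ := hao
      have hx : p % 40 = 7 ∨ p % 40 = 15 ∨ p % 40 = 23 ∨ p % 40 = 31 ∨ p % 40 = 39 := by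
        omega
      have hx15 : p % 40 ≠ 15 := by
        intro h15
        have h5 : (5:ℕ) ∣ p := by omega
        have : (5:ℕ) = p := (Nat.prime_dvd_prime_iff_eq (by norm_num) hp).mp h5
        omega
      have hsq40 : p ^ 2 % 40 = (p % 40) ^ 2 % 40 := by rw [Nat.pow_mod]
      have hpk40 : p ^ (2 * k) % 40 = (p ^ 2 % 40) ^ k % 40 := by
        rw [pow_mul, Nat.pow_mod]
      have hp1 : 7 ≤ p := by
        have h2 := hp.two_le
        omega
      have hpm1 : (p - 1) % 40 = p % 40 - 1 := by omega
      have hphi40 : N.totient % 40 = (p ^ (2*k) % 40) * ((p-1) % 40) % 40 := by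
        rw [htot, hk]
        have e : 2 * k + 1 - 1 = 2 * k := by omega
        rw [e, Nat.mul_mod]
      have hpa40 : p ^ a % 40 = (p ^ (2*k) % 40) * (p % 40) % 40 := by
        rw [hk, pow_succ, Nat.mul_mod]
      have hne23 := pellQ_mod40_ne23 n
      rcases hx with h'|h'|h'|h'|h'
      · rw [h'] at hsq40 hpm1
        norm_num at hsq40
        rw [hsq40] at hpk40
        rcases nine_pow_mod40 k with h9|h9 <;> rw [h9] at hpk40 <;>
          rw [hpk40, hpm1] at hphi40 <;> omega
      · exact absurd h' hx15
      · rw [h'] at hsq40 hpm1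
        norm_num at hsq40
        rw [hsq40] at hpk40
        rcases nine_pow_mod40 k with h9|h9 <;> rw [h9] at hpk40 <;>
          rw [hpk40, hpm1] at hphi40 <;> rw [hpk40, h'] at hpa40 <;> omega
      · rw [h'] at hsq40 hpm1
        norm_num at hsq40
        rw [hsq40] at hpk40
        norm_num at hpk40
        rw [hpk40, hpm1] at hphi40
        omega
      · rw [h'] at hsq40 hpm1
        norm_num at hsq40
        rw [hsq40] at hpk40
        norm_num at hpk40
        rw [hpk40, hpm1] at hphi40
        omega
end
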